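/- arXiv:0808.3840 — 2 statements merged into one kernel-verified Lean document; each statement's English description precedes it below -/
import Mathlib

section
/- Let V be an F_2-vector space and let ε_1 : F_2[V] → V be the group homomorphism sending Σ α_v X^v to Σ α_v v. If ξ is a nonzero element of the augmentation ideal I[V] with ε_1(ξ) = 0, and d = |D(ξ)|, then d ≥ 4 and ξ can be written as a sum of at most d − 2 products (1 + X^u)(1 + X^v) (2-fold Pfister elements). If moreover 0 ∈ D(ξ), then at most d − 3 such terms suffice. -/
/-- The augmentation map ε₀ on the group algebra F₂[V]. -/
noncomputable def eps0 (V : Type*) [AddCommGroup V] [Module (ZMod 2) V] :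
    AddMonoidAlgebra (ZMod 2) V →ₐ[ZMod 2] ZMod 2 :=
  AddMonoidAlgebra.lift (ZMod 2) (ZMod 2) V 1

/-- The augmentation ideal I[V] ⊆ F₂[V]. -/
noncomputable def augIdeal (V : Type*) [AddCommGroup V] [Module (ZMod 2) V] :
    Ideal (AddMonoidAlgebra (ZMod 2) V) :=
  RingHom.ker (eps0 V).toRingHom

/-- The map ε₁ : F₂[V] → V, Σ αᵥ Xᵛ ↦ Σ αᵥ v. -/
noncomputable def eps1 (V : Type*) [AddCommGroup V] [Module (ZMod 2) V] :
    AddMonoidAlgebra (ZMod 2) V →+ V :=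
  (Finsupp.liftAddHom fun v => (smulAddHom (ZMod 2) V).flip v).comp
    (AddMonoidAlgebra.coeffAddEquiv (R := ZMod 2) (M := V)).toAddMonoidHom

/-- 1-fold Pfister elements 1 + Xᵛ. -/
def IsPfister1 {V : Type*} [AddCommGroup V] [Module (ZMod 2) V]
    (x : AddMonoidAlgebra (ZMod 2) V) : Prop :=
  ∃ v : V, x = 1 + AddMonoidAlgebra.single v 1

/-- 2-fold Pfister elements (1 + Xᵘ)(1 + Xᵛ). -/
def IsPfister2 {V : Type*} [AddCommGroup V] [Module (ZMod 2) V]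
    (x : AddMonoidAlgebra (ZMod 2) V) : Prop :=
  ∃ u v : V, x = (1 + AddMonoidAlgebra.single u 1) * (1 + AddMonoidAlgebra.single v 1)

/-- m-fold Pfister elements (1 + X^{v₁})⋯(1 + X^{v_m}). -/
def IsPfister {V : Type*} [AddCommGroup V] [Module (ZMod 2) V] (m : ℕ)
    (x : AddMonoidAlgebra (ZMod 2) V) : Prop :=
  ∃ v : Fin m → V, x = ∏ i, (1 + AddMonoidAlgebra.single (v i) 1)

/-- The m-Pfister number: least number of m-fold Pfister elements summing to x. -/
noncomputable def PfNum {V : Type*} [AddCommGroup V] [Module (ZMod 2) V] (m : ℕ)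
    (x : AddMonoidAlgebra (ZMod 2) V) : ℕ :=
  sInf {r | ∃ f : Fin r → AddMonoidAlgebra (ZMod 2) V,
    (∀ i, IsPfister m (f i)) ∧ x = ∑ i, f i}


section PfisterAux

variable {V : Type*} [AddCommGroup V] [Module (ZMod 2) V]

lemma myTwoZero : (2 : AddMonoidAlgebra (ZMod 2) V) = 0 := by
  have h := map_ofNat (algebraMap (ZMod 2) (AddMonoidAlgebra (ZMod 2) V)) 2
  rw [show ((2:ZMod 2)) = 0 by decide] at h
  rw [← h, map_zero]

lemma myPfAdd (a b : V) :
    (1 + AddMonoidAlgebra.single a (1:ZMod 2)) + (1 + AddMonoidAlgebra.single b 1) =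
      (1 + AddMonoidAlgebra.single a 1) * (1 + AddMonoidAlgebra.single b 1)
      + (1 + AddMonoidAlgebra.single (a + b) 1) := by
  have hmul : AddMonoidAlgebra.single a (1:ZMod 2) * AddMonoidAlgebra.single b 1
      = AddMonoidAlgebra.single (a + b) 1 := by
    rw [AddMonoidAlgebra.single_mul_single, one_mul]
  have h2 : (2 : AddMonoidAlgebra (ZMod 2) V) = 0 := myTwoZero
  linear_combination -hmul - (AddMonoidAlgebra.single (a+b) (1:ZMod 2)) * h2

lemma myAddSelf (a : V) : a + a = 0 := by
  have h := two_smul (ZMod 2) a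
  rw [show (2 : ZMod 2) = 0 by decide, zero_smul] at h
  exact h.symm

lemma myListDecomp : ∀ (n : ℕ) (l : List V), l.length ≤ n → l.sum = 0 →
    ∃ r ≤ l.length - 2, ∃ f : Fin r → AddMonoidAlgebra (ZMod 2) V,
      (∀ i, IsPfister2 (f i)) ∧
      (l.map fun v => 1 + AddMonoidAlgebra.single v 1).sum = ∑ i, f i := by
  intro n
  induction n with
  | zero =>
    intro l hl _
    have : l = [] := List.length_eq_zero_iff.mp (Nat.le_zero.mp hl)
    subst this
    exact ⟨0, by simp, Fin.elim0, fun i => i.elim0, by simp⟩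
  | succ n ih =>
    intro l hl hs
    rcases l with _ | ⟨a, _ | ⟨b, _ | ⟨c, t⟩⟩⟩
    · exact ⟨0, by simp, Fin.elim0, fun i => i.elim0, by simp⟩
    · have ha : a = 0 := by simpa using hs
      subst ha
      refine ⟨0, by simp, Fin.elim0, fun i => i.elim0, ?_⟩
      simp only [List.map_cons, List.map_nil, List.sum_cons, List.sum_nil, add_zero]
      rw [← AddMonoidAlgebra.one_def,
        show (1 + 1 : AddMonoidAlgebra (ZMod 2) V) = 2 by ring, myTwoZero]
      simp
    · -- [a, b]
      have hb : b = a := by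
        have hab : a + b = 0 := by simpa using hs
        exact add_left_cancel (hab.trans (myAddSelf a).symm)
      subst hb
      refine ⟨0, by simp, Fin.elim0, fun i => i.elim0, ?_⟩
      simp only [List.map_cons, List.map_nil, List.sum_cons, List.sum_nil, add_zero]
      rw [show ((1 + AddMonoidAlgebra.single b (1:ZMod 2)) + (1 + AddMonoidAlgebra.single b 1))
        = 2 * (1 + AddMonoidAlgebra.single b 1) by ring, myTwoZero, zero_mul]
      simp
    · -- a :: b :: c :: t
      have hlen : ((a + b) :: c :: t).length ≤ n := by
        simp only [List.length_cons] at hl ⊢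
        omega
      have hs' : ((a + b) :: c :: t).sum = 0 := by
        simpa [add_assoc] using hs
      obtain ⟨r, hr, f, hf, hsum⟩ := ih _ hlen hs'
      refine ⟨r + 1, ?_,
        Fin.cons ((1 + AddMonoidAlgebra.single a 1) * (1 + AddMonoidAlgebra.single b 1)) f,
        ?_, ?_⟩
      · simp only [List.length_cons] at hr ⊢
        omega
      · intro i
        refine Fin.cases ⟨a, b, rfl⟩ (fun j => hf j) i
      · rw [Fin.sum_cons]
        simp only [List.map_cons, List.sum_cons] at hsum ⊢
        rw [← hsum]
        linear_combination myPfAdd a b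

lemma myEps1Single (v : V) (c : ZMod 2) :
    eps1 V (AddMonoidAlgebra.single v c) = c • v := by
  show (Finsupp.liftAddHom fun v => (smulAddHom (ZMod 2) V).flip v) (AddMonoidAlgebra.coeff (AddMonoidAlgebra.single v c)) = c • v
  rw [AddMonoidAlgebra.coeff_single, Finsupp.liftAddHom_apply_single]
  rfl

end PfisterAux

/-- A nonzero ξ ∈ I[V] with ε₁(ξ) = 0 and support of cardinality d satisfies d ≥ 4,
ξ is a sum of at most d − 2 two-fold Pfister elements; at most d − 3 if 0 ∈ D(ξ). -/
theorem pfister2_decomposition (V : Type*) [AddCommGroup V] [Module (ZMod 2) V]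
    (ξ : AddMonoidAlgebra (ZMod 2) V) (hξ : ξ ≠ 0) (hmem : ξ ∈ augIdeal V)
    (he1 : eps1 V ξ = 0) :
    4 ≤ ξ.coeff.support.card ∧
    (∃ r ≤ ξ.coeff.support.card - 2, ∃ f : Fin r → AddMonoidAlgebra (ZMod 2) V,
      (∀ i, IsPfister2 (f i)) ∧ ξ = ∑ i, f i) ∧
    ((0 : V) ∈ ξ.coeff.support →
      ∃ r ≤ ξ.coeff.support.card - 3, ∃ f : Fin r → AddMonoidAlgebra (ZMod 2) V,
        (∀ i, IsPfister2 (f i)) ∧ ξ = ∑ i, f i) := by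
  classical
  have hcoef : ∀ v ∈ ξ.coeff.support, ξ.coeff v = 1 := by
    intro v hv
    have h := Finsupp.mem_support_iff.mp hv
    revert h; generalize ξ.coeff v = c; revert c; decide
  have hrepr : ξ = ∑ v ∈ ξ.coeff.support, AddMonoidAlgebra.single v 1 := by
    rw [← AddMonoidAlgebra.coeff_inj, AddMonoidAlgebra.coeff_sum]
    conv_lhs => rw [← Finsupp.sum_single ξ.coeff]
    rw [Finsupp.sum]
    exact Finset.sum_congr rfl fun v hv => by rw [hcoef v hv]; rfl
  have hmem0 : eps0 V ξ = 0 := hmem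
  have h0 : ((ξ.coeff.support.card : ZMod 2)) = 0 := by
    rw [hrepr, map_sum] at hmem0
    simp only [eps0, AddMonoidAlgebra.lift_single] at hmem0
    simpa using hmem0
  have heven : 2 ∣ ξ.coeff.support.card := (ZMod.natCast_eq_zero_iff _ _).mp h0
  have hsum0 : ∑ v ∈ ξ.coeff.support, v = 0 := by
    have h := he1
    rw [hrepr, map_sum] at h
    simp only [myEps1Single, one_smul] at h
    exact h
  have hcast : ((ξ.coeff.support.card : ℕ) : AddMonoidAlgebra (ZMod 2) V) = 0 := by
    have h := map_natCast (algebraMap (ZMod 2) (AddMonoidAlgebra (ZMod 2) V)) ξ.coeff.support.card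
    rw [h0, map_zero] at h
    exact h.symm
  have hXi : ∑ v ∈ ξ.coeff.support, (1 + AddMonoidAlgebra.single v (1:ZMod 2)) = ξ := by
    rw [Finset.sum_add_distrib, Finset.sum_const, ← hrepr, nsmul_eq_mul, hcast, zero_mul,
      zero_add]
  have hpos : 0 < ξ.coeff.support.card :=
    Finset.card_pos.mpr (Finsupp.support_nonempty_iff.mpr (mt AddMonoidAlgebra.coeff_eq_zero.mp hξ))
  have hne2 : ξ.coeff.support.card ≠ 2 := by
    intro h2
    obtain ⟨a, b, hab, hD⟩ := Finset.card_eq_two.mp h2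
    rw [hD, Finset.sum_pair hab] at hsum0
    exact hab (add_left_cancel (hsum0.trans (myAddSelf a).symm)).symm
  have hcard4 : 4 ≤ ξ.coeff.support.card := by
    obtain ⟨k, hk⟩ := heven
    omega
  refine ⟨hcard4, ?_, ?_⟩
  · -- general case: list over the support
    have hlsum : (ξ.coeff.support.toList).sum = 0 := by
      rw [← Finset.sum_map_toList ξ.coeff.support (fun v => v)] at hsum0
      simpa using hsum0
    obtain ⟨r, hr, f, hf, hfs⟩ :=
      myListDecomp ξ.coeff.support.toList.length ξ.coeff.support.toList le_rfl hlsum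
    rw [Finset.length_toList] at hr
    refine ⟨r, hr, f, hf, ?_⟩
    rw [← hXi, ← Finset.sum_map_toList, ← hfs]
  · -- case 0 ∈ support
    intro h0mem
    have hsum0' : ∑ v ∈ ξ.coeff.support.erase 0, v = 0 := by
      rw [Finset.sum_erase ξ.coeff.support rfl]
      exact hsum0
    have hlsum : ((ξ.coeff.support.erase 0).toList).sum = 0 := by
      rw [← Finset.sum_map_toList (ξ.coeff.support.erase 0) (fun v => v)] at hsum0'
      simpa using hsum0'
    obtain ⟨r, hr, f, hf, hfs⟩ :=
      myListDecomp _ (ξ.coeff.support.erase 0).toList le_rfl hlsum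
    rw [Finset.length_toList, Finset.card_erase_of_mem h0mem] at hr
    refine ⟨r, by omega, f, hf, ?_⟩
    have hzero : (1 + AddMonoidAlgebra.single (0:V) (1:ZMod 2)) = 0 := by
      rw [← AddMonoidAlgebra.one_def,
        show (1 + 1 : AddMonoidAlgebra (ZMod 2) V) = 2 by ring, myTwoZero]
    have herase : ∑ v ∈ ξ.coeff.support.erase 0, (1 + AddMonoidAlgebra.single v (1:ZMod 2)) = ξ := by
      exact (Finset.sum_erase ξ.coeff.support
        (f := fun v => (1 + AddMonoidAlgebra.single v (1:ZMod 2))) hzero).trans hXi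
    rw [← herase, ← Finset.sum_map_toList, ← hfs]
end

section
/- Let k be a field of characteristic ≠ 2 containing a square root of −1, and let q be a quadratic form of dimension n over k whose Witt class lies in I²(k). Then the Witt class of q can be written as a sum of at most n − 2 two-fold Pfister forms ⟨1, a⟩⊗⟨1, b⟩; if moreover q represents 1, then at most n − 3 such forms suffice. -/
/-- The image of the one-dimensional form `⟨a⟩` in the integral group ring `ℤ[kˣ]`. -/
noncomputable def genElt (k : Type*) [Field k] (a : kˣ) : MonoidAlgebra ℤ kˣ :=
  MonoidAlgebra.of ℤ kˣ a

/-- The ideal of Witt relations in `ℤ[kˣ]`: the square-class relations `⟨u²⟩ = ⟨1⟩`,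
the hyperbolic relation `⟨1⟩ + ⟨-1⟩ = 0`, and the chain relations
`⟨a⟩ + ⟨b⟩ = ⟨c⟩ + ⟨abc⟩` whenever `a + b = c ≠ 0` in `k`.  By Witt's presentation
theorem, the quotient of `ℤ[kˣ]` by this ideal is the Witt ring `W(k)`. -/
noncomputable def wittRel (k : Type*) [Field k] : Ideal (MonoidAlgebra ℤ kˣ) :=
  Ideal.span (insert (genElt k 1 + genElt k (-1))
    ({x | ∃ u : kˣ, x = genElt k (u ^ 2) - genElt k 1} ∪
     {x | ∃ a b c : kˣ, (a : k) + (b : k) = (c : k) ∧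
        x = genElt k a + genElt k b - genElt k c - genElt k (a * b * c)}))

/-- The Witt ring `W(k)`, via Witt's presentation. -/
abbrev WittRing (k : Type*) [Field k] := MonoidAlgebra ℤ kˣ ⧸ wittRel k

/-- The Witt class of the one-dimensional form `⟨a⟩`. -/
noncomputable def wcls (k : Type*) [Field k] (a : kˣ) : WittRing k :=
  Ideal.Quotient.mk (wittRel k) (genElt k a)

/-- The Witt class of the diagonal quadratic form `⟨q 0, …, q (n-1)⟩`. -/
noncomputable def wclassOf (k : Type*) [Field k] {n : ℕ} (q : Fin n → kˣ) : WittRing k :=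
  ∑ i, wcls k (q i)

/-- The fundamental ideal `I(k)`, generated by the classes of even-dimensional forms. -/
noncomputable def fundIdeal (k : Type*) [Field k] : Ideal (WittRing k) :=
  Ideal.span {x | ∃ a b : kˣ, x = wcls k a + wcls k b}

/-- The diagonal form `⟨q 0, …, q (n-1)⟩` represents `1`. -/
def RepresentsOne (k : Type*) [Field k] {n : ℕ} (q : Fin n → kˣ) : Prop :=
  ∃ c : Fin n → k, ∑ i, (q i : k) * c i ^ 2 = 1

/-- The diagonal form `⟨q 0, …, q (n-1)⟩` is anisotropic. -/
def Anisotropic (k : Type*) [Field k] {n : ℕ} (q : Fin n → kˣ) : Prop :=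
  ∀ c : Fin n → k, ∑ i, (q i : k) * c i ^ 2 = 0 → c = 0

/-- Witt classes of 1-fold Pfister forms `⟨1, a⟩`. -/
def IsPfister1W (k : Type*) [Field k] (x : WittRing k) : Prop :=
  ∃ a : kˣ, x = wcls k 1 + wcls k a

/-- Witt classes of 2-fold Pfister forms `⟨⟨a, b⟩⟩ = ⟨1,a⟩ ⊗ ⟨1,b⟩`. -/
def IsPfister2W (k : Type*) [Field k] (x : WittRing k) : Prop :=
  ∃ a b : kˣ, x = (wcls k 1 + wcls k a) * (wcls k 1 + wcls k b)

/-- `x` is a sum of `r` Witt classes of 1-fold Pfister forms. -/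
def Pf1In (k : Type*) [Field k] (x : WittRing k) (r : ℕ) : Prop :=
  ∃ f : Fin r → WittRing k, (∀ i, IsPfister1W k (f i)) ∧ x = ∑ i, f i

/-- `x` is a sum of `r` Witt classes of 2-fold Pfister forms. -/
def Pf2In (k : Type*) [Field k] (x : WittRing k) (r : ℕ) : Prop :=
  ∃ f : Fin r → WittRing k, (∀ i, IsPfister2W k (f i)) ∧ x = ∑ i, f i

/-- The 1-Pfister number of a Witt class: the least number of 1-fold Pfister forms
whose sum is the given class. -/
noncomputable def Pf1Num (k : Type*) [Field k] (x : WittRing k) : ℕ :=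
  sInf {r | Pf1In k x r}

/-- The 2-Pfister number of a Witt class: the least number of 2-fold Pfister forms
whose sum is the given class. -/
noncomputable def Pf2Num (k : Type*) [Field k] (x : WittRing k) : ℕ :=
  sInf {r | Pf2In k x r}

/-- `k` contains a square root of `-1`. -/
def HasSqrtNegOne (k : Type*) [Field k] : Prop := ∃ i : k, i * i = -1
section PfAux

variable {k : Type*} [Field k]

lemma genElt_one : genElt k 1 = 1 := map_one (MonoidAlgebra.of ℤ kˣ)

lemma genElt_mul (a b : kˣ) : genElt k a * genElt k b = genElt k (a * b) :=
  (map_mul (MonoidAlgebra.of ℤ kˣ) a b).symm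

lemma wcls_one : wcls k 1 = 1 := by
  unfold wcls; rw [genElt_one, map_one]

lemma wcls_mul (a b : kˣ) : wcls k a * wcls k b = wcls k (a * b) := by
  unfold wcls; rw [← map_mul, genElt_mul]

lemma sq_mem_wittRel (u : kˣ) : genElt k (u ^ 2) - genElt k 1 ∈ wittRel k := by
  refine Ideal.subset_span ?_
  simp only [Set.mem_insert_iff, Set.mem_union, Set.mem_setOf_eq]
  exact Or.inr (Or.inl ⟨u, rfl⟩)

lemma hyper_mem_wittRel : genElt k 1 + genElt k (-1) ∈ wittRel k :=
  Ideal.subset_span (Set.mem_insert _ _)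

lemma chain_mem_wittRel (a b c : kˣ) (h : (a : k) + (b : k) = (c : k)) :
    genElt k a + genElt k b - genElt k c - genElt k (a * b * c) ∈ wittRel k := by
  refine Ideal.subset_span ?_
  simp only [Set.mem_insert_iff, Set.mem_union, Set.mem_setOf_eq]
  exact Or.inr (Or.inr ⟨a, b, c, h, rfl⟩)

lemma wcls_sq (u : kˣ) : wcls k (u ^ 2) = 1 := by
  have h : wcls k (u ^ 2) - wcls k 1 = 0 := by
    have h0 := Ideal.Quotient.eq_zero_iff_mem.2 (sq_mem_wittRel (k := k) u)
    rw [map_sub] at h0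
    exact h0
  rw [sub_eq_zero.mp h, wcls_one]

lemma chain_rel (a b c : kˣ) (h : (a : k) + (b : k) = (c : k)) :
    wcls k a + wcls k b = wcls k c + wcls k (a * b * c) := by
  have h0 := Ideal.Quotient.eq_zero_iff_mem.2 (chain_mem_wittRel a b c h)
  rw [map_sub, map_sub, map_add] at h0
  have h1 : wcls k a + wcls k b - wcls k c - wcls k (a * b * c) = 0 := h0
  linear_combination h1

lemma neg_one_unit_sq (hsq : HasSqrtNegOne k) : ∃ u : kˣ, u ^ 2 = (-1 : kˣ) := by
  obtain ⟨i, hi⟩ := hsq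
  have hi0 : i ≠ 0 := by
    intro h
    rw [h, zero_mul] at hi
    exact one_ne_zero (neg_eq_zero.mp hi.symm)
  refine ⟨Units.mk0 i hi0, Units.ext ?_⟩
  push_cast [sq]
  simpa using hi

lemma wcls_neg_one (hsq : HasSqrtNegOne k) : wcls k (-1) = 1 := by
  obtain ⟨u, hu⟩ := neg_one_unit_sq hsq
  rw [← hu, wcls_sq]

lemma witt_two_zero (hsq : HasSqrtNegOne k) (x : WittRing k) : x + x = 0 := by
  have h1 : (1 : WittRing k) + 1 = 0 := by
    have h0 := Ideal.Quotient.eq_zero_iff_mem.2 (hyper_mem_wittRel (k := k))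
    rw [map_add] at h0
    have h2 : wcls k 1 + wcls k (-1) = 0 := h0
    rwa [wcls_one, wcls_neg_one hsq] at h2
  calc x + x = x * (1 + 1) := by ring
    _ = 0 := by rw [h1]; exact mul_zero x

lemma wcls_eq_of_isSquare {a b : kˣ} (h : IsSquare (a * b)) : wcls k a = wcls k b := by
  obtain ⟨r, hr⟩ := h
  have h1 : a * r ^ 2 = b * a ^ 2 := by
    rw [sq, sq, ← hr, ← mul_assoc]
    exact mul_comm _ _
  have ha := wcls_mul a (r ^ 2)
  have hb := wcls_mul b (a ^ 2)
  have hh : wcls k (a * r ^ 2) = wcls k (b * a ^ 2) := by rw [h1]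
  have hsr := wcls_sq (k := k) r
  have hsa := wcls_sq (k := k) a
  linear_combination -wcls k a * hsr + ha + hh - hb + wcls k b * hsa

lemma pf_identity (hsq : HasSqrtNegOne k) (a b : kˣ) :
    wcls k a + wcls k b
      = (1 + wcls k a) * (1 + wcls k b) + (1 + wcls k (a * b)) := by
  have h2 := witt_two_zero hsq ((1 : WittRing k) + wcls k (a * b))
  have hm := wcls_mul a b
  linear_combination -hm - h2

end PfAux

section InvAux

variable {k : Type*} [Field k]

noncomputable def sqSub (k : Type*) [Field k] : Subgroup kˣ :=
  (powMonoidHom 2 : kˣ →* kˣ).range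

lemma mem_sqSub_of_sq (u : kˣ) : u ^ 2 ∈ sqSub k := ⟨u, rfl⟩

lemma isSquare_of_mem_sqSub {x : kˣ} (h : x ∈ sqSub k) : IsSquare x := by
  obtain ⟨u, hu⟩ := h
  exact ⟨u, by rw [← hu, powMonoidHom_apply, sq]⟩

noncomputable def sqAdd (k : Type*) [Field k] : AddSubgroup (Additive kˣ) :=
  Subgroup.toAddSubgroup (sqSub k)

/-- The square-class group, additively, as an opaque type with pinned instances. -/
noncomputable def SCG (k : Type*) [Field k] := Additive kˣ ⧸ sqAdd k

noncomputable instance SCG.addCommGroup (k : Type*) [Field k] : AddCommGroup (SCG k) :=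
  inferInstanceAs (AddCommGroup (Additive kˣ ⧸ sqAdd k))

noncomputable instance SCG.intModule (k : Type*) [Field k] : Module ℤ (SCG k) :=
  AddCommGroup.toIntModule _

noncomputable def scg (a : kˣ) : SCG k :=
  (QuotientAddGroup.mk (Additive.ofMul a) : Additive kˣ ⧸ sqAdd k)

lemma scg_add (a b : kˣ) : scg (k := k) (a * b) = scg a + scg b := rfl

lemma scg_eq_zero_iff {a : kˣ} : scg (k := k) a = 0 ↔ a ∈ sqSub k :=
  QuotientAddGroup.eq_zero_iff (Additive.ofMul a)

lemma scg_surjective (v : SCG k) : ∃ a : kˣ, scg a = v := by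
  obtain ⟨x, hx⟩ := QuotientAddGroup.mk_surjective (show Additive kˣ ⧸ sqAdd k from v)
  exact ⟨Additive.toMul x, hx⟩

lemma scg_two_zero (v : SCG k) : v + v = 0 := by
  obtain ⟨a, rfl⟩ := scg_surjective v
  rw [← scg_add, ← sq, scg_eq_zero_iff]
  exact mem_sqSub_of_sq a

lemma scg_even_zsmul_zero {c : ℤ} (hc : (2 : ℤ) ∣ c) (v : SCG k) : c • v = 0 := by
  obtain ⟨t, rfl⟩ := hc
  rw [mul_smul, two_smul, scg_two_zero]

noncomputable def psi (k : Type*) [Field k] : MonoidAlgebra ℤ kˣ →ₗ[ℤ] SCG k :=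
  Finsupp.linearCombination ℤ (fun a : kˣ => scg a) ∘ₗ (MonoidAlgebra.coeffLinearEquiv ℤ).toLinearMap

lemma psi_of (a : kˣ) : psi k (MonoidAlgebra.of ℤ kˣ a) = scg a := by
  simp [psi, MonoidAlgebra.of_apply]

noncomputable def aug (k : Type*) [Field k] : MonoidAlgebra ℤ kˣ →ₐ[ℤ] ℤ :=
  MonoidAlgebra.lift ℤ ℤ kˣ 1

lemma aug_of (a : kˣ) : aug k (MonoidAlgebra.of ℤ kˣ a) = 1 := by
  unfold aug; rw [MonoidAlgebra.lift_of]; rfl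

lemma psi_mul (x r : MonoidAlgebra ℤ kˣ) :
    psi k (r * x) = aug k x • psi k r + aug k r • psi k x := by
  induction x using MonoidAlgebra.induction_on with
  | of a =>
    induction r using MonoidAlgebra.induction_on with
    | of t =>
      rw [← map_mul, psi_of, psi_of, psi_of, aug_of, aug_of, one_smul, one_smul, scg_add]
    | add f g hf hg =>
      simp only [add_mul, map_add, hf, hg]
      module
    | smul c f hf =>
      simp only [smul_mul_assoc, map_smul, hf, smul_eq_mul]
      module
  | add f g hf hg =>
    simp only [mul_add, map_add, hf, hg]
    module
  | smul c f hf =>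
    simp only [mul_smul_comm, map_smul, hf, smul_eq_mul]
    module

lemma span_killed {T : Set (MonoidAlgebra ℤ kˣ)}
    (hT : ∀ g ∈ T, psi k g = 0 ∧ (2 : ℤ) ∣ aug k g) :
    ∀ x ∈ Ideal.span T, psi k x = 0 ∧ (2 : ℤ) ∣ aug k x := by
  intro x hx
  refine Submodule.span_induction hT ⟨map_zero _, by rw [map_zero]; exact dvd_zero 2⟩ ?_ ?_ hx
  · rintro u v _ _ ⟨hu1, hu2⟩ ⟨hv1, hv2⟩
    refine ⟨?_, by rw [map_add]; exact dvd_add hu2 hv2⟩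
    rw [map_add, hu1, hv1, add_zero]
  · rintro a u _ ⟨h1, h2⟩
    rw [smul_eq_mul]
    constructor
    · rw [psi_mul, h1, smul_zero, add_zero, scg_even_zsmul_zero h2]
    · rw [map_mul]
      exact Dvd.dvd.mul_left h2 _

end InvAux

section InvAux2

variable {k : Type*} [Field k]

lemma psi_gen (a : kˣ) : psi k (genElt k a) = scg a := psi_of a

lemma aug_gen (a : kˣ) : aug k (genElt k a) = 1 := aug_of a

lemma scg_eq_zero_of_sq {a u : kˣ} (h : u ^ 2 = a) : scg (k := k) a = 0 :=
  scg_eq_zero_iff.2 (h ▸ mem_sqSub_of_sq u)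

lemma scg_prod {ι : Type*} (s : Finset ι) (f : ι → kˣ) :
    scg (k := k) (∏ i ∈ s, f i) = ∑ i ∈ s, scg (f i) := by
  classical
  induction s using Finset.induction_on with
  | empty =>
    rw [Finset.prod_empty, Finset.sum_empty]
    exact scg_eq_zero_of_sq (one_pow 2)
  | insert _ _ h ih =>
    rw [Finset.prod_insert h, Finset.sum_insert h, scg_add, ih]

lemma wittRel_killed (hsq : HasSqrtNegOne k) :
    ∀ x ∈ wittRel k, psi k x = 0 ∧ (2 : ℤ) ∣ aug k x := by
  apply span_killed
  intro g hg
  simp only [Set.mem_insert_iff, Set.mem_union, Set.mem_setOf_eq] at hg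
  rcases hg with rfl | ⟨w, rfl⟩ | ⟨a, b, c, habc, rfl⟩
  · obtain ⟨u, hu⟩ := neg_one_unit_sq hsq
    refine ⟨?_, ?_⟩
    · rw [map_add, psi_gen, psi_gen, scg_eq_zero_of_sq (one_pow 2),
        scg_eq_zero_of_sq hu, add_zero]
    · rw [map_add, aug_gen, aug_gen]
      norm_num
  · refine ⟨?_, ?_⟩
    · rw [map_sub, psi_gen, psi_gen, scg_eq_zero_of_sq (one_pow 2),
        scg_eq_zero_of_sq (rfl : w ^ 2 = w ^ 2), sub_zero]
    · rw [map_sub, aug_gen, aug_gen]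
      norm_num
  · refine ⟨?_, ?_⟩
    · rw [map_sub, map_sub, map_add, psi_gen, psi_gen, psi_gen, psi_gen,
        scg_add (a * b) c, scg_add a b]
      have h2 := scg_two_zero (scg (k := k) c)
      calc scg (k := k) a + scg b - scg c - (scg a + scg b + scg c)
          = -(scg c + scg c) := by abel
        _ = 0 := by rw [h2, neg_zero]
    · rw [map_sub, map_sub, map_add, aug_gen, aug_gen, aug_gen, aug_gen]
      norm_num

lemma genElt_sum_eq {n : ℕ} (q : Fin n → kˣ) :
    wclassOf k q = Ideal.Quotient.mk (wittRel k) (∑ i, genElt k (q i)) := by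
  rw [map_sum]; rfl

lemma psi_sum {n : ℕ} (q : Fin n → kˣ) :
    psi k (∑ i, genElt k (q i)) = scg (∏ i, q i) := by
  rw [map_sum]
  simp only [psi_gen]
  exact (scg_prod _ _).symm

lemma aug_sum {n : ℕ} (q : Fin n → kˣ) :
    aug k (∑ i, genElt k (q i)) = (n : ℤ) := by
  rw [map_sum]
  simp [aug_gen]

lemma mem_sq_invariants (hsq : HasSqrtNegOne k) {n : ℕ} (q : Fin n → kˣ)
    (hq : wclassOf k q ∈ (fundIdeal k) ^ 2) :
    Even n ∧ (∏ i, q i) ∈ sqSub k := by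
  classical
  set S0 : Set (MonoidAlgebra ℤ kˣ) := {y | ∃ a b : kˣ, y = genElt k a + genElt k b} with hS0
  have himg : fundIdeal k = Ideal.map (Ideal.Quotient.mk (wittRel k)) (Ideal.span S0) := by
    rw [Ideal.map_span]
    unfold fundIdeal
    congr 1
    ext x
    constructor
    · rintro ⟨a, b, rfl⟩
      exact ⟨genElt k a + genElt k b, ⟨a, b, rfl⟩, by rw [map_add]; rfl⟩
    · rintro ⟨y, ⟨a, b, rfl⟩, rfl⟩
      exact ⟨a, b, by rw [map_add]; rfl⟩
  have hq2 : wclassOf k q ∈ Ideal.map (Ideal.Quotient.mk (wittRel k)) ((Ideal.span S0) ^ 2) := by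
    rw [himg, Submodule.pow_succ, Submodule.pow_one] at hq
    refine Ideal.mul_le.2 ?_ hq
    intro r hr t ht
    obtain ⟨r', hr', rfl⟩ := (Ideal.mem_map_iff_of_surjective _ Ideal.Quotient.mk_surjective).1 hr
    obtain ⟨t', ht', rfl⟩ := (Ideal.mem_map_iff_of_surjective _ Ideal.Quotient.mk_surjective).1 ht
    rw [← map_mul]
    exact Ideal.mem_map_of_mem _ (by rw [Submodule.pow_succ, Submodule.pow_one]; exact Ideal.mul_mem_mul hr' ht')
  obtain ⟨y, hy, hyeq⟩ := (Ideal.mem_map_iff_of_surjective _ Ideal.Quotient.mk_surjective).1 hq2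
  have hdiff : (∑ i, genElt k (q i)) - y ∈ wittRel k :=
    Ideal.Quotient.eq.1 ((genElt_sum_eq q).symm.trans hyeq.symm)
  have hy2 : psi k y = 0 ∧ (2 : ℤ) ∣ aug k y := by
    have hsp : (Ideal.span S0) ^ 2 = Ideal.span (⋃ s ∈ S0, ⋃ t ∈ S0, {s * t}) := by
      rw [sq, Ideal.span_mul_span']
      congr 1; ext; simp [Set.mem_mul, eq_comm]
    rw [hsp] at hy
    refine span_killed ?_ y hy
    intro g hg
    simp only [Set.mem_iUnion, Set.mem_singleton_iff, hS0, Set.mem_setOf_eq] at hg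
    obtain ⟨s, ⟨a, b, rfl⟩, t, ⟨c, d, rfl⟩, rfl⟩ := hg
    have haug2 : ∀ x y : kˣ, aug k (genElt k x + genElt k y) = 2 := by
      intro x y
      rw [map_add, aug_gen, aug_gen]
      norm_num
    constructor
    · rw [psi_mul,
        scg_even_zsmul_zero (by rw [haug2]) _,
        scg_even_zsmul_zero (by rw [haug2]) _, add_zero]
    · rw [map_mul, haug2]
      exact dvd_mul_right 2 _
  have hdiffk := wittRel_killed hsq _ hdiff
  have hrw : (∑ i, genElt k (q i)) = y + ((∑ i, genElt k (q i)) - y) := by ring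
  have hpsi : psi k (∑ i, genElt k (q i)) = 0 := by
    rw [hrw, map_add, hy2.1, hdiffk.1, add_zero]
  have haug : (2 : ℤ) ∣ aug k (∑ i, genElt k (q i)) := by
    rw [hrw, map_add]
    exact dvd_add hy2.2 hdiffk.2
  constructor
  · rw [aug_sum] at haug
    have h2n : 2 ∣ n := by exact_mod_cast haug
    exact even_iff_two_dvd.2 h2n
  · rw [psi_sum] at hpsi
    exact scg_eq_zero_iff.1 hpsi

lemma prod_b_square (hsq : HasSqrtNegOne k) {n m : ℕ} (q : Fin n → kˣ) (b : Fin m → kˣ)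
    (hqs : (∏ i, q i) ∈ sqSub k)
    (heq : wclassOf k q = 1 + ∑ i, wcls k (b i)) :
    (∏ i, b i) ∈ sqSub k := by
  have hmk : Ideal.Quotient.mk (wittRel k) (∑ i, genElt k (q i))
      = Ideal.Quotient.mk (wittRel k) (genElt k 1 + ∑ i, genElt k (b i)) := by
    rw [← genElt_sum_eq, heq, map_add, map_sum, genElt_one, map_one]
    rfl
  have hd := Ideal.Quotient.eq.1 hmk
  have h0 := (wittRel_killed hsq _ hd).1
  rw [map_sub, map_add, psi_sum, psi_sum, psi_gen, scg_eq_zero_of_sq (one_pow 2), zero_add,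
    scg_eq_zero_iff.2 hqs, zero_sub, neg_eq_zero] at h0
  exact scg_eq_zero_iff.1 h0

end InvAux2

section DecompAux

variable {k : Type*} [Field k]

lemma wcls_mul_sq (a u : kˣ) : wcls k (a * u ^ 2) = wcls k a := by
  have h := wcls_mul a (u ^ 2)
  have hs := wcls_sq (k := k) u
  linear_combination wcls k a * hs - h

lemma sum_wcls_cons (m : ℕ) (a0 : kˣ) (b : Fin m → kˣ) :
    (∑ i : Fin (m + 1), wcls k ((Fin.cons a0 b : Fin (m + 1) → kˣ) i))
      = wcls k a0 + ∑ i : Fin m, wcls k (b i) := by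
  rw [Fin.sum_univ_succ]
  simp only [Fin.cons_zero, Fin.cons_succ]

lemma repr_lemma : ∀ (n : ℕ) (a : Fin (n + 1) → kˣ) (c : Fin (n + 1) → k) (v : kˣ),
    (∑ i, (a i : k) * c i ^ 2) = (v : k) →
    ∃ b : Fin n → kˣ, ∑ i, wcls k (a i) = wcls k v + ∑ i, wcls k (b i) := by
  intro n
  induction n with
  | zero =>
    intro a c v h
    rw [Fin.sum_univ_one] at h
    have hc0 : c 0 ≠ 0 := by
      intro h0
      rw [h0] at h
      simp at h
      exact v.ne_zero h.symm
    have hveq : v = a 0 * (Units.mk0 (c 0) hc0) ^ 2 := by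
      refine Units.ext ?_
      push_cast [Units.val_mk0]
      linear_combination -h
    refine ⟨Fin.elim0, ?_⟩
    rw [Fin.sum_univ_one, hveq, wcls_mul_sq]
    simp
  | succ m ih =>
    intro a c v h
    rw [Fin.sum_univ_succ] at h
    by_cases hw0 : (∑ i : Fin (m + 1), (a i.succ : k) * c i.succ ^ 2) = 0
    · rw [hw0, add_zero] at h
      have hc0 : c 0 ≠ 0 := by
        intro h0
        rw [h0] at h
        simp at h
        exact v.ne_zero h.symm
      have hveq : v = a 0 * (Units.mk0 (c 0) hc0) ^ 2 := by
        refine Units.ext ?_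
        push_cast [Units.val_mk0]
        linear_combination -h
      refine ⟨fun i => a i.succ, ?_⟩
      rw [Fin.sum_univ_succ, hveq, wcls_mul_sq]
    · set w : kˣ := Units.mk0 _ hw0 with hwdef
      have hwval : (w : k) = ∑ i : Fin (m + 1), (a i.succ : k) * c i.succ ^ 2 := by
        rw [hwdef]
        exact Units.val_mk0 _
      obtain ⟨b', hb'⟩ := ih (fun i => a i.succ) (fun i => c i.succ) w hwval.symm
      replace hb' : (∑ i : Fin (m + 1), wcls k (a i.succ))
          = wcls k w + ∑ i, wcls k (b' i) := hb'
      by_cases hc0 : c 0 = 0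
      · have hwv : w = v := by
          refine Units.ext ?_
          rw [hwval, ← h, hc0]
          ring
        refine ⟨Fin.cons (a 0) b', ?_⟩
        rw [Fin.sum_univ_succ, hb', hwv, sum_wcls_cons]
        ring
      · have hsum : ((a 0 * Units.mk0 (c 0) hc0 ^ 2 : kˣ) : k) + (w : k) = (v : k) := by
          push_cast [Units.val_mk0, hwval]
          linear_combination h
        have hch := chain_rel _ _ _ hsum
        have hα2 : wcls k (a 0 * Units.mk0 (c 0) hc0 ^ 2) = wcls k (a 0) :=
          wcls_mul_sq (a 0) _
        refine ⟨Fin.cons (a 0 * Units.mk0 (c 0) hc0 ^ 2 * w * v) b', ?_⟩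
        rw [Fin.sum_univ_succ, hb', sum_wcls_cons]
        linear_combination hch - hα2

lemma decomp (hsq : HasSqrtNegOne k) :
    ∀ (m : ℕ) (a : Fin (m + 1) → kˣ), ∃ f : Fin m → WittRing k,
      (∀ i, IsPfister2W k (f i)) ∧
      (∑ i, wcls k (a i)) = (∑ i, f i)
        + (if Even m then wcls k (∏ i, a i) else 1 + wcls k (∏ i, a i)) := by
  intro m
  induction m with
  | zero =>
    intro a
    refine ⟨Fin.elim0, fun i => i.elim0, ?_⟩
    rw [Fin.sum_univ_one, Fin.prod_univ_one, if_pos Even.zero]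
    simp
  | succ m ih =>
    intro a
    obtain ⟨f, hf, hsum⟩ := ih (fun i => a i.castSucc)
    replace hsum : (∑ i : Fin (m + 1), wcls k (a i.castSucc))
        = (∑ i, f i) + (if Even m then wcls k (∏ i : Fin (m + 1), a i.castSucc)
            else 1 + wcls k (∏ i : Fin (m + 1), a i.castSucc)) := hsum
    set d : kˣ := ∏ i : Fin (m + 1), a i.castSucc with hd
    set P : WittRing k := (1 + wcls k d) * (1 + wcls k (a (Fin.last (m + 1)))) with hP
    refine ⟨Fin.snoc f P, ?_, ?_⟩
    · intro i
      refine Fin.lastCases ?_ ?_ i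
      · rw [Fin.snoc_last]
        exact ⟨d, a (Fin.last (m + 1)), by rw [wcls_one, hP]⟩
      · intro j
        rw [Fin.snoc_castSucc]
        exact hf j
    · rw [Fin.sum_univ_castSucc (f := fun i => wcls k (a i)), hsum,
        Fin.sum_univ_castSucc (f := fun i => Fin.snoc f P i)]
      simp only [Fin.snoc_castSucc, Fin.snoc_last]
      rw [Fin.prod_univ_castSucc (f := a), ← hd]
      have hid := pf_identity hsq d (a (Fin.last (m + 1)))
      by_cases hm : Even m
      · rw [if_pos hm, if_neg (by simp [Nat.even_add_one, hm])]
        linear_combination hid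
      · rw [if_neg hm, if_pos (by simp [Nat.even_add_one, hm])]
        have h2 := witt_two_zero hsq (1 : WittRing k)
        linear_combination hid + h2

lemma prod_last_mul (m : ℕ) (a : Fin (m + 2) → kˣ) :
    a (Fin.last (m + 1)) * (∏ i : Fin (m + 1), a i.castSucc) = ∏ i, a i := by
  rw [Fin.prod_univ_castSucc (f := a)]
  exact mul_comm _ _

lemma even_case (hsq : HasSqrtNegOne k) (m : ℕ) (hm : Even m) (a : Fin (m + 2) → kˣ)
    (hsqr : (∏ i, a i) ∈ sqSub k) :
    ∃ f : Fin m → WittRing k, (∀ i, IsPfister2W k (f i)) ∧ ∑ i, wcls k (a i) = ∑ i, f i := by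
  obtain ⟨f, hf, hsum⟩ := decomp hsq m (fun i : Fin (m + 1) => a i.castSucc)
  replace hsum : (∑ i : Fin (m + 1), wcls k (a i.castSucc)) = (∑ i, f i) +
      (if Even m then wcls k (∏ i : Fin (m + 1), a i.castSucc)
        else 1 + wcls k (∏ i : Fin (m + 1), a i.castSucc)) := hsum
  rw [if_pos hm] at hsum
  refine ⟨f, hf, ?_⟩
  rw [Fin.sum_univ_castSucc (f := fun i => wcls k (a i)), hsum]
  have hlast : wcls k (a (Fin.last (m + 1))) = wcls k (∏ i : Fin (m + 1), a i.castSucc) := by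
    apply wcls_eq_of_isSquare
    apply isSquare_of_mem_sqSub
    rw [prod_last_mul m a]
    exact hsqr
  rw [hlast]
  have h2 := witt_two_zero hsq (wcls k (∏ i : Fin (m + 1), a i.castSucc))
  linear_combination h2

lemma odd_case (hsq : HasSqrtNegOne k) (m : ℕ) (hm : ¬ Even m) (a : Fin (m + 2) → kˣ)
    (hsqr : (∏ i, a i) ∈ sqSub k) :
    ∃ f : Fin m → WittRing k, (∀ i, IsPfister2W k (f i)) ∧
      1 + ∑ i, wcls k (a i) = ∑ i, f i := by
  obtain ⟨f, hf, hsum⟩ := decomp hsq m (fun i : Fin (m + 1) => a i.castSucc)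
  replace hsum : (∑ i : Fin (m + 1), wcls k (a i.castSucc)) = (∑ i, f i) +
      (if Even m then wcls k (∏ i : Fin (m + 1), a i.castSucc)
        else 1 + wcls k (∏ i : Fin (m + 1), a i.castSucc)) := hsum
  rw [if_neg hm] at hsum
  refine ⟨f, hf, ?_⟩
  rw [Fin.sum_univ_castSucc (f := fun i => wcls k (a i)), hsum]
  have hlast : wcls k (a (Fin.last (m + 1))) = wcls k (∏ i : Fin (m + 1), a i.castSucc) := by
    apply wcls_eq_of_isSquare
    apply isSquare_of_mem_sqSub
    rw [prod_last_mul m a]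
    exact hsqr
  rw [hlast]
  have h2 := witt_two_zero hsq (wcls k (∏ i : Fin (m + 1), a i.castSucc))
  have h1 := witt_two_zero hsq (1 : WittRing k)
  linear_combination h2 + h1

end DecompAux

/-- A quadratic form of dimension n over k (char ≠ 2, √-1 ∈ k) whose Witt class lies in
I²(k) is a sum of at most n − 2 two-fold Pfister forms in W(k); at most n − 3 if it
represents 1. -/
theorem pf2_upper_bound (k : Type*) [Field k] (hchar : ringChar k ≠ 2)
    (hsq : HasSqrtNegOne k) (n : ℕ) (q : Fin n → kˣ)
    (hq : wclassOf k q ∈ (fundIdeal k) ^ 2) :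
    (∃ r ≤ n - 2, Pf2In k (wclassOf k q) r) ∧
    (RepresentsOne k q → ∃ r ≤ n - 3, Pf2In k (wclassOf k q) r) := by
  obtain ⟨hev, hprod⟩ := mem_sq_invariants hsq q hq
  constructor
  · rcases n with _ | _ | m
    · exact ⟨0, le_refl 0, Fin.elim0, fun i => i.elim0, by simp [wclassOf]⟩
    · exact absurd hev (by decide)
    · have hm : Even m := by
        rw [Nat.even_iff] at hev ⊢
        omega
      obtain ⟨f, hf, hsum⟩ := even_case hsq m hm q hprod
      exact ⟨m, by omega, f, hf, hsum⟩
  · intro hrep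
    rcases n with _ | n'
    · obtain ⟨c, hc⟩ := hrep
      simp at hc
    · obtain ⟨c, hc⟩ := hrep
      obtain ⟨b, hb⟩ := repr_lemma n' q c 1 (by rw [Units.val_one]; exact hc)
      have hb2 : wclassOf k q = 1 + ∑ i, wcls k (b i) := by
        rw [← wcls_one]
        exact hb
      have hbsq := prod_b_square hsq q b hprod hb2
      rcases n' with _ | _ | M
      · exact absurd hev (by decide)
      · refine ⟨0, by omega, Fin.elim0, fun i => i.elim0, ?_⟩
        have hb0 : wcls k (b 0) = wcls k 1 := by
          apply wcls_eq_of_isSquare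
          apply isSquare_of_mem_sqSub
          rw [mul_one]
          simpa [Fin.prod_univ_one] using hbsq
        have h2 := witt_two_zero hsq (1 : WittRing k)
        rw [hb2, Fin.sum_univ_one, hb0, wcls_one]
        simpa using h2
      · have hM : ¬ Even M := by
          rw [Nat.even_iff] at hev ⊢
          omega
        obtain ⟨f, hf, hsum⟩ := odd_case hsq M hM b hbsq
        refine ⟨M, by omega, f, hf, ?_⟩
        rw [hb2]
        exact hsum
end
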